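/- Let n ≥ 3 be an integer and 1 < α < n + 1. For c > 0 define ψ_α(c) = 2 + 3/((1 + (4c² + 1)^{−(n+2−α)/2})^{1/(n−2)} − 1). Then for every c > 0 and every a ≥ ψ_α(c)·c one has ∫_{−a}^{c} (t − 1/a)(t + a)^{n−2} / (t² + 1)^{(n+2−α)/2} dt < 0. -/

import Mathlib

open intervalIntegral Real Set

private lemma pow_sub_pow_aux (k : ℕ) {x y : ℝ} (hy : 0 ≤ y) (hxy : y ≤ x) :
    x ^ (k + 1) - y ^ (k + 1) ≤ ((k : ℝ) + 1) * (x - y) * x ^ k := by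
  induction k with
  | zero => simp
  | succ k ih =>
    have hx : 0 ≤ x := hy.trans hxy
    have hyx : y ^ (k + 1) ≤ x ^ (k + 1) := pow_le_pow_left₀ hy hxy _
    have h1 : x * (x ^ (k + 1) - y ^ (k + 1)) ≤ x * (((k : ℝ) + 1) * (x - y) * x ^ k) :=
      mul_le_mul_of_nonneg_left ih hx
    have h2 : (x - y) * y ^ (k + 1) ≤ (x - y) * x ^ (k + 1) :=
      mul_le_mul_of_nonneg_left hyx (sub_nonneg.2 hxy)
    have e : x ^ (k + 2) - y ^ (k + 2)
        = x * (x ^ (k + 1) - y ^ (k + 1)) + (x - y) * y ^ (k + 1) := by ring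
    have e2 : x * (((k : ℝ) + 1) * (x - y) * x ^ k) + (x - y) * x ^ (k + 1)
        = ((k : ℝ) + 1 + 1) * (x - y) * x ^ (k + 1) := by ring
    push_cast
    calc x ^ (k + 2) - y ^ (k + 2)
        ≤ x * (((k : ℝ) + 1) * (x - y) * x ^ k) + (x - y) * x ^ (k + 1) := by
          rw [e]; exact add_le_add h1 h2
      _ = ((k : ℝ) + 1 + 1) * (x - y) * x ^ (k + 1) := e2

set_option maxHeartbeats 2000000 in
theorem stmt_6 (n : ℕ) (hn : 3 ≤ n) (α : ℝ) (hα1 : 1 < α) (hα : α < n + 1)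
    (c : ℝ) (hc : 0 < c) (a : ℝ)
    (ha : (2 + 3 / ((1 + (4 * c ^ 2 + 1) ^ (-(((n : ℝ) + 2 - α) / 2))) ^
        (1 / ((n : ℝ) - 2)) - 1)) * c ≤ a) :
    (∫ t in (-a)..c,
      (t - 1 / a) * (t + a) ^ (n - 2) / (t ^ 2 + 1) ^ (((n : ℝ) + 2 - α) / 2)) < 0 := by
  have hnR : (3 : ℝ) ≤ (n : ℝ) := by exact_mod_cast hn
  set β : ℝ := ((n : ℝ) + 2 - α) / 2 with hβdef
  have hβ0 : 0 < β := by
    have : α < (n : ℝ) + 2 := by linarith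
    unfold β; linarith
  set d : ℝ := (n : ℝ) - 2 with hddef
  have hd1 : (1 : ℝ) ≤ d := by unfold d; linarith
  have hd0 : 0 < d := by linarith
  have hcastd : ((n - 2 : ℕ) : ℝ) = d := by
    have : (2 : ℕ) ≤ n := by omega
    push_cast [Nat.cast_sub this]; ring
  set ε : ℝ := (4 * c ^ 2 + 1) ^ (-β) with hεdef
  have hbase : (1 : ℝ) ≤ 4 * c ^ 2 + 1 := by nlinarith
  have hε0 : 0 < ε := Real.rpow_pos_of_pos (by nlinarith) _
  have hε1 : ε ≤ 1 := Real.rpow_le_one_of_one_le_of_nonpos hbase (by linarith)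
  set m : ℝ := (1 + ε) ^ (1 / d) with hmdef
  have h1ε : (1 : ℝ) < 1 + ε := by linarith
  have hm1 : 1 < m := by
    unfold m
    rw [Real.one_lt_rpow_iff_of_pos (by linarith)]
    exact Or.inl ⟨h1ε, by positivity⟩
  -- Bernoulli: m ≤ 1 + ε / d
  have hBern : m ≤ 1 + ε / d := by
    have h1 : 1 + ε ≤ (1 + ε / d) ^ (n - 2 : ℕ) := by
      have hεd : (0:ℝ) ≤ ε / d := by positivity
      have := one_add_mul_le_pow (a := ε / d) (by linarith) (n - 2)
      calc 1 + ε = 1 + ((n - 2 : ℕ) : ℝ) * (ε / d) := by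
            rw [hcastd]; field_simp
        _ ≤ (1 + ε / d) ^ (n - 2 : ℕ) := this
    have h2 : m ≤ ((1 + ε / d) ^ (n - 2 : ℕ)) ^ (1 / d) :=
      Real.rpow_le_rpow (by linarith) h1 (by positivity)
    have h3 : ((1 + ε / d) ^ (n - 2 : ℕ)) ^ (1 / d) = 1 + ε / d := by
      rw [← Real.rpow_natCast (1 + ε / d) (n - 2), ← Real.rpow_mul (by positivity),
        hcastd, mul_one_div, div_self hd0.ne', Real.rpow_one]
    rw [h3] at h2; exact h2
  -- m ^ (n-2) = 1 + ε
  have hmpow : m ^ (n - 2 : ℕ) = 1 + ε := by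
    rw [hmdef, ← Real.rpow_natCast ((1 + ε) ^ (1 / d)) (n - 2), ← Real.rpow_mul (by linarith),
      hcastd, one_div_mul_cancel hd0.ne', Real.rpow_one]
  -- consequences of ha
  have hψ : (2 + 3 / (m - 1)) * c ≤ a := ha
  have hm1' : 0 < m - 1 := by linarith
  have hac : 3 * c / (m - 1) ≤ a - 2 * c := by
    have : (2 + 3 / (m - 1)) * c = 2 * c + 3 * c / (m - 1) := by field_simp
    linarith [hψ, this ▸ hψ]
  have ha2c : 0 < a - 2 * c := lt_of_lt_of_le (by positivity) hac
  have ha0 : 0 < a := by linarith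
  have hE0 : 3 * c ≤ (m - 1) * (a - 2 * c) := by
    rw [div_le_iff₀ hm1'] at hac
    linarith [hac]
  have hE1 : 3 * d * c ≤ ε * (a - 2 * c) := by
    have h1 : (m - 1) * (a - 2 * c) ≤ (ε / d) * (a - 2 * c) :=
      mul_le_mul_of_nonneg_right (by linarith) ha2c.le
    have h2 : 3 * c ≤ (ε / d) * (a - 2 * c) := le_trans hE0 h1
    calc 3 * d * c = d * (3 * c) := by ring
      _ ≤ d * ((ε / d) * (a - 2 * c)) := mul_le_mul_of_nonneg_left h2 hd0.le
      _ = ε * (a - 2 * c) := by field_simp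
  have hE2 : a + c ≤ m * (a - 2 * c) := by nlinarith [hE0]
  -- (a+c)^(n-3) ≤ 2 (a-2c)^(n-3)
  have hQP : (a + c) ^ (n - 3 : ℕ) ≤ 2 * (a - 2 * c) ^ (n - 3 : ℕ) := by
    have h1 : (a + c) ^ (n - 3 : ℕ) ≤ (m * (a - 2 * c)) ^ (n - 3 : ℕ) :=
      pow_le_pow_left₀ (by linarith) hE2 _
    have h2 : m ^ (n - 3 : ℕ) ≤ m ^ (n - 2 : ℕ) :=
      pow_le_pow_right₀ (by linarith) (by omega)
    have h3 : m ^ (n - 2 : ℕ) ≤ 2 := by rw [hmpow]; linarith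
    calc (a + c) ^ (n - 3 : ℕ) ≤ (m * (a - 2 * c)) ^ (n - 3 : ℕ) := h1
      _ = m ^ (n - 3 : ℕ) * (a - 2 * c) ^ (n - 3 : ℕ) := mul_pow _ _ _
      _ ≤ 2 * (a - 2 * c) ^ (n - 3 : ℕ) :=
          mul_le_mul_of_nonneg_right (h2.trans h3) (pow_nonneg ha2c.le _)
  -- the integrand
  set F : ℝ → ℝ := fun t => (t - 1 / a) * (t + a) ^ (n - 2) / (t ^ 2 + 1) ^ β with hF
  clear_value β d ε m
  have hden_pos : ∀ t : ℝ, 0 < (t ^ 2 + 1 : ℝ) ^ β := fun t =>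
    Real.rpow_pos_of_pos (by positivity) _
  have hFc : Continuous F := by
    apply Continuous.div
    · exact (continuous_id.sub continuous_const).mul
        ((continuous_id.add continuous_const).pow _)
    · exact Continuous.rpow_const ((continuous_pow 2).add continuous_const) (fun t => Or.inr hβ0.le)
    · exact fun t => (hden_pos t).ne'
  have hInt : ∀ p q : ℝ, IntervalIntegrable F MeasureTheory.volume p q :=
    fun p q => hFc.intervalIntegrable p q
  have hIntN : ∀ p q : ℝ, IntervalIntegrable (fun t => F (-t)) MeasureTheory.volume p q :=
    fun p q => (hFc.comp continuous_neg).intervalIntegrable p q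
  -- split
  have e1 : (∫ t in (-a)..(-(2*c)), F t) + (∫ t in (-(2*c))..(-c), F t)
      = ∫ t in (-a)..(-c), F t :=
    integral_add_adjacent_intervals (hInt _ _) (hInt _ _)
  have e2 : (∫ t in (-a)..(-c), F t) + (∫ t in (-c)..c, F t) = ∫ t in (-a)..c, F t :=
    integral_add_adjacent_intervals (hInt _ _) (hInt _ _)
  -- piece 1 : ∫_{-a}^{-2c} ≤ 0
  have H1 : (∫ t in (-a)..(-(2*c)), F t) ≤ 0 := by
    have hle : -a ≤ -(2*c) := by linarith
    have := integral_mono_on (f := F) (g := fun _ => (0:ℝ))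
      (μ := MeasureTheory.volume) hle (hInt _ _) intervalIntegrable_const ?_
    · simpa using this
    · intro t ht
      obtain ⟨ht1, ht2⟩ := ht
      have hia : 0 < 1 / a := by positivity
      have hnum : (t - 1 / a) * (t + a) ^ (n - 2) ≤ 0 :=
        mul_nonpos_of_nonpos_of_nonneg (by linarith) (pow_nonneg (by linarith) _)
      exact div_nonpos_iff.mpr (Or.inr ⟨hnum, (hden_pos t).le⟩)
  -- piece 2 : ∫_{-2c}^{-c} ≤ -(c^2 (a-2c)^(n-2) ε)
  have H2 : (∫ t in (-(2*c))..(-c), F t) ≤ -(c * c * (a - 2*c) ^ (n - 2 : ℕ) * ε) := by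
    have hle : -(2*c) ≤ -c := by linarith
    have hmono := integral_mono_on (f := F)
      (g := fun _ => -(c * (a - 2*c) ^ (n - 2 : ℕ) * ε))
      (μ := MeasureTheory.volume) hle (hInt _ _) intervalIntegrable_const ?_
    · rw [integral_const] at hmono
      have : (-c - -(2*c)) • -(c * (a - 2*c) ^ (n - 2 : ℕ) * ε)
          = -(c * c * (a - 2*c) ^ (n - 2 : ℕ) * ε) := by
        simp [smul_eq_mul]; ring
      linarith [this ▸ hmono]
    · intro t ht
      obtain ⟨ht1, ht2⟩ := ht
      have hnum1 : t - 1 / a ≤ -c := by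
        have : 0 < 1 / a := by positivity
        linarith
      have hpow : (a - 2*c) ^ (n - 2 : ℕ) ≤ (t + a) ^ (n - 2 : ℕ) :=
        pow_le_pow_left₀ ha2c.le (by linarith) _
      have hnum : (t - 1 / a) * (t + a) ^ (n - 2 : ℕ) ≤ -c * (a - 2*c) ^ (n - 2 : ℕ) := by
        calc (t - 1 / a) * (t + a) ^ (n - 2 : ℕ)
            ≤ (t - 1 / a) * (a - 2*c) ^ (n - 2 : ℕ) :=
              mul_le_mul_of_nonpos_left hpow (by linarith [hnum1])
          _ ≤ -c * (a - 2*c) ^ (n - 2 : ℕ) :=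
              mul_le_mul_of_nonneg_right hnum1 (pow_nonneg ha2c.le _)
      have hden_le : (t ^ 2 + 1 : ℝ) ^ β ≤ (4 * c ^ 2 + 1) ^ β :=
        Real.rpow_le_rpow (by positivity) (by nlinarith) hβ0.le
      have hnum_neg : -c * (a - 2*c) ^ (n - 2 : ℕ) ≤ 0 := by
        have := pow_nonneg ha2c.le (n - 2); nlinarith
      have step1 : F t ≤ (-c * (a - 2*c) ^ (n - 2 : ℕ)) / ((t ^ 2 + 1) ^ β) :=
        div_le_div_of_nonneg_right hnum (hden_pos t).le |>.trans (le_refl _)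
      have step2 : (-c * (a - 2*c) ^ (n - 2 : ℕ)) / ((t ^ 2 + 1) ^ β)
          ≤ (-c * (a - 2*c) ^ (n - 2 : ℕ)) / ((4 * c ^ 2 + 1) ^ β) := by
        rw [div_le_div_iff₀ (hden_pos t) (Real.rpow_pos_of_pos (by positivity) _)]
        linarith [mul_le_mul_of_nonneg_left hden_le (neg_nonneg.mpr hnum_neg)]
      have hfin : (-c * (a - 2*c) ^ (n - 2 : ℕ)) / ((4 * c ^ 2 + 1) ^ β)
          = -(c * (a - 2*c) ^ (n - 2 : ℕ) * ε) := by
        rw [hεdef, Real.rpow_neg (by nlinarith)]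
        field_simp
      calc F t ≤ (-c * (a - 2*c) ^ (n - 2 : ℕ)) / ((t ^ 2 + 1) ^ β) := step1
        _ ≤ (-c * (a - 2*c) ^ (n - 2 : ℕ)) / ((4 * c ^ 2 + 1) ^ β) := step2
        _ = -(c * (a - 2*c) ^ (n - 2 : ℕ) * ε) := hfin
  -- piece 3 : ∫_{-c}^{c} ≤ 2 d (a+c)^(n-3) c^3 / 3
  have H3 : (∫ t in (-c)..c, F t) ≤ 2 * d * (a + c) ^ (n - 3 : ℕ) * c ^ 3 / 3 := by
    have hsplit : (∫ t in (-c)..c, F t)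
        = (∫ t in (-c)..(0:ℝ), F t) + ∫ t in (0:ℝ)..c, F t :=
      (integral_add_adjacent_intervals (hInt _ _) (hInt _ _)).symm
    have hrefl : (∫ t in (-c)..(0:ℝ), F t) = ∫ t in (0:ℝ)..c, F (-t) := by
      rw [intervalIntegral.integral_comp_neg (a := 0) (b := c) (f := F)]
      norm_num
    have hcomb : (∫ t in (-c)..c, F t) = ∫ t in (0:ℝ)..c, (F (-t) + F t) := by
      rw [hsplit, hrefl, ← intervalIntegral.integral_add (hIntN _ _) (hInt _ _)]
    rw [hcomb]
    have hbound : ∀ t ∈ Icc (0:ℝ) c,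
        F (-t) + F t ≤ 2 * d * (a + c) ^ (n - 3 : ℕ) * t ^ 2 := by
      intro t ht
      obtain ⟨ht0, htc⟩ := ht
      have hkey : F (-t) + F t
          = ((-t - 1 / a) * (-t + a) ^ (n - 2 : ℕ)
            + (t - 1 / a) * (t + a) ^ (n - 2 : ℕ)) / ((t ^ 2 + 1) ^ β) := by
        rw [hF]; simp only [neg_sq]; rw [← add_div]
      have haux := pow_sub_pow_aux (n - 3) (x := t + a) (y := a - t)
        (by linarith) (by linarith)
      have hnn : (n - 3 : ℕ) + 1 = n - 2 := by omega
      have hcast3 : ((n - 3 : ℕ) : ℝ) + 1 = d := by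
        have h3 : (3 : ℕ) ≤ n := hn
        rw [hddef]
        push_cast [Nat.cast_sub h3]
        ring
      rw [hnn, hcast3] at haux
      -- haux : (t+a)^(n-2) - (a-t)^(n-2) ≤ d * ((t+a)-(a-t)) * (t+a)^(n-3)
      have hpow_le : (t + a) ^ (n - 3 : ℕ) ≤ (a + c) ^ (n - 3 : ℕ) :=
        pow_le_pow_left₀ (by linarith) (by linarith) _
      have hnum_bound : (-t - 1 / a) * (-t + a) ^ (n - 2 : ℕ)
          + (t - 1 / a) * (t + a) ^ (n - 2 : ℕ)
          ≤ 2 * d * (a + c) ^ (n - 3 : ℕ) * t ^ 2 := by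
        have hp1 : (0:ℝ) ≤ (-t + a) ^ (n - 2 : ℕ) := pow_nonneg (by linarith) _
        have hp2 : (0:ℝ) ≤ (t + a) ^ (n - 2 : ℕ) := pow_nonneg (by linarith) _
        have hia : 0 < 1 / a := by positivity
        have e3 : -t + a = a - t := by ring
        rw [e3]
        have key : (-t - 1 / a) * (a - t) ^ (n - 2 : ℕ)
            + (t - 1 / a) * (t + a) ^ (n - 2 : ℕ)
            ≤ t * ((t + a) ^ (n - 2 : ℕ) - (a - t) ^ (n - 2 : ℕ)) := by
          have hp1' : (0:ℝ) ≤ (a - t) ^ (n - 2 : ℕ) := pow_nonneg (by linarith) _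
          have h0 : (0:ℝ) ≤ (1 / a) * ((a - t) ^ (n - 2 : ℕ) + (t + a) ^ (n - 2 : ℕ)) :=
            mul_nonneg hia.le (add_nonneg hp1' hp2)
          have hexp : t * ((t + a) ^ (n - 2 : ℕ) - (a - t) ^ (n - 2 : ℕ))
              - ((-t - 1 / a) * (a - t) ^ (n - 2 : ℕ)
                + (t - 1 / a) * (t + a) ^ (n - 2 : ℕ))
              = (1 / a) * ((a - t) ^ (n - 2 : ℕ) + (t + a) ^ (n - 2 : ℕ)) := by ring
          linarith [hexp ▸ h0]
        have key2 : t * ((t + a) ^ (n - 2 : ℕ) - (a - t) ^ (n - 2 : ℕ))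
            ≤ t * (d * (2 * t) * (t + a) ^ (n - 3 : ℕ)) := by
          apply mul_le_mul_of_nonneg_left _ ht0
          calc (t + a) ^ (n - 2 : ℕ) - (a - t) ^ (n - 2 : ℕ)
              ≤ d * ((t + a) - (a - t)) * (t + a) ^ (n - 3 : ℕ) := haux
            _ = d * (2 * t) * (t + a) ^ (n - 3 : ℕ) := by ring
        have key3 : t * (d * (2 * t) * (t + a) ^ (n - 3 : ℕ))
            ≤ 2 * d * (a + c) ^ (n - 3 : ℕ) * t ^ 2 := by
          have h1 : (0:ℝ) ≤ 2 * d * t ^ 2 := by positivity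
          calc t * (d * (2 * t) * (t + a) ^ (n - 3 : ℕ))
              = 2 * d * t ^ 2 * (t + a) ^ (n - 3 : ℕ) := by ring
            _ ≤ 2 * d * t ^ 2 * (a + c) ^ (n - 3 : ℕ) :=
                mul_le_mul_of_nonneg_left hpow_le h1
            _ = 2 * d * (a + c) ^ (n - 3 : ℕ) * t ^ 2 := by ring
        exact key.trans (key2.trans key3)
      rw [hkey, div_le_iff₀ (hden_pos t)]
      have hB : (0:ℝ) ≤ 2 * d * (a + c) ^ (n - 3 : ℕ) * t ^ 2 := by positivity
      have hden1 : (1:ℝ) ≤ (t ^ 2 + 1) ^ β :=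
        Real.one_le_rpow (by nlinarith) hβ0.le
      have h1' : 2 * d * (a + c) ^ (n - 3 : ℕ) * t ^ 2 * 1
          ≤ 2 * d * (a + c) ^ (n - 3 : ℕ) * t ^ 2 * ((t ^ 2 + 1) ^ β) :=
        mul_le_mul_of_nonneg_left hden1 hB
      exact hnum_bound.trans ((mul_one _).symm.le.trans h1')
    have hmono := integral_mono_on (f := fun t => F (-t) + F t)
      (g := fun t => 2 * d * (a + c) ^ (n - 3 : ℕ) * t ^ 2)
      (μ := MeasureTheory.volume) hc.le ((hIntN 0 c).add (hInt 0 c))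
      (Continuous.intervalIntegrable (by continuity) 0 c) hbound
    have hval : (∫ t in (0:ℝ)..c, 2 * d * (a + c) ^ (n - 3 : ℕ) * t ^ 2)
        = 2 * d * (a + c) ^ (n - 3 : ℕ) * c ^ 3 / 3 := by
      rw [intervalIntegral.integral_const_mul, integral_pow]
      norm_num; ring
    linarith [hval ▸ hmono]
  -- combine
  have hIle : (∫ t in (-a)..c, F t)
      ≤ -(c * c * (a - 2*c) ^ (n - 2 : ℕ) * ε) + 2 * d * (a + c) ^ (n - 3 : ℕ) * c ^ 3 / 3 := by
    linarith [e1, e2, H1, H2, H3]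
  have hfinal : 2 * d * (a + c) ^ (n - 3 : ℕ) * c ^ 3 / 3
      < c * c * (a - 2*c) ^ (n - 2 : ℕ) * ε := by
    have hsucc : (a - 2*c) ^ (n - 2 : ℕ) = (a - 2*c) ^ (n - 3 : ℕ) * (a - 2*c) := by
      rw [← pow_succ]; congr 1; omega
    rw [hsucc]
    have hP3 : (0:ℝ) < (a - 2*c) ^ (n - 3 : ℕ) := pow_pos ha2c _
    have hQ3 : (0:ℝ) < (a + c) ^ (n - 3 : ℕ) := pow_pos (by linarith) _
    -- c*c*((a-2c)^(n-3)*(a-2c))*ε ≥ c^2 * P3 * 3 d c = 3 d c^3 P3 ≥ (3/2) d c^3 Q3 > (2/3) d c^3 Q3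
    have h1 : 3 * d * c * (c * c * (a - 2*c) ^ (n - 3 : ℕ))
        ≤ c * c * ((a - 2*c) ^ (n - 3 : ℕ) * (a - 2*c)) * ε := by
      have := mul_le_mul_of_nonneg_left hE1 (by positivity :
        (0:ℝ) ≤ c * c * (a - 2*c) ^ (n - 3 : ℕ))
      nlinarith [this]
    have h2 : 2 * d * (a + c) ^ (n - 3 : ℕ) * c ^ 3 / 3
        < 3 * d * c * (c * c * (a - 2*c) ^ (n - 3 : ℕ)) := by
      linarith [mul_le_mul_of_nonneg_left hQP (by positivity : (0:ℝ) ≤ d * c ^ 3),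
        mul_pos (mul_pos hd0 (pow_pos hc 3)) hP3]
    linarith
  exact lt_of_le_of_lt hIle (by linarith [hfinal])
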